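/- Let Λ = ℚ[p_1, p_2, …] be the polynomial ring over ℚ in countably many variables p_k indexed by positive integers. Define h_m ∈ Λ by h_0 = 1 and m·h_m = Σ_{i=1}^m p_i·h_{m−i} for m ≥ 1, and for n ≥ 1 let D_n be the unique ℚ-linear derivation of Λ with D_n(p_k) = k^n for all k ≥ 1. Then for all k ≥ 0 and m ≥ 0, the iterates satisfy D_2^k(h_m) = D_1^{2k}(h_{m+k}). -/

import Mathlib

open MvPolynomial Finset

/-- The derivation `D_n` of `Λ = ℚ[p_1, p_2, …]` with `D_n(p_k) = k^n` for all `k ≥ 1`. -/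
noncomputable def Dn (n : ℕ) : Derivation ℚ (MvPolynomial ℕ+ ℚ) (MvPolynomial ℕ+ ℚ) :=
  mkDerivation ℚ fun k : ℕ+ => C (((k : ℕ) : ℚ) ^ n)

lemma Dn_X (n : ℕ) (k : ℕ+) : Dn n (X k) = C (((k : ℕ) : ℚ) ^ n) :=
  mkDerivation_X _ _ _

lemma smul_cancel {c : ℚ} (hc : c ≠ 0) {a b : MvPolynomial ℕ+ ℚ} (h : c • a = c • b) :
    a = b := by
  have h2 := congrArg (fun x => c⁻¹ • x) h
  simpa [smul_smul, inv_mul_cancel₀ hc] using h2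

theorem double_sum {A : Type*} [AddCommMonoid A] (m : ℕ) (f : ℕ → ℕ → A) :
    ∑ j ∈ Finset.range m, ∑ i ∈ Finset.range j, f i (j - 1 - i)
      = ∑ i ∈ Finset.range m, ∑ l ∈ Finset.range (m - 1 - i), f i l := by
  rw [Finset.sum_sigma', Finset.sum_sigma']
  refine Finset.sum_nbij' (fun p : Σ _ : ℕ, ℕ => (⟨p.2, p.1 - 1 - p.2⟩ : Σ _ : ℕ, ℕ))
    (fun q : Σ _ : ℕ, ℕ => (⟨q.1 + q.2 + 1, q.1⟩ : Σ _ : ℕ, ℕ))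
    ?_ ?_ ?_ ?_ (fun _ _ => rfl)
  · rintro ⟨a,b⟩ h
    simp only [Finset.mem_sigma, Finset.mem_range] at h ⊢
    omega
  · rintro ⟨a,b⟩ h
    simp only [Finset.mem_sigma, Finset.mem_range] at h ⊢
    omega
  · rintro ⟨a,b⟩ h
    simp only [Finset.mem_sigma, Finset.mem_range] at h
    dsimp only
    rw [show b + (a - 1 - b) + 1 = a by omega]
  · rintro ⟨a,b⟩ h
    simp only [Finset.mem_sigma, Finset.mem_range] at h
    dsimp only
    rw [show a + b + 1 - 1 - a = b by omega]

lemma lemA (H : ℕ → MvPolynomial ℕ+ ℚ) (H0 : H 0 = 1)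
    (Hrec : ∀ m : ℕ, (m : ℚ) • H m =
      ∑ i ∈ Finset.range m, X i.succPNat * H (m - (i + 1))) (m : ℕ) :
    Dn 1 (H m) = ∑ j ∈ Finset.range m, H j := by
  induction m using Nat.strong_induction_on with
  | _ m ih =>
    obtain _ | m := m
    · simp [H0]
    · have hcast : ((m + 1 : ℕ) : ℚ) ≠ 0 := by positivity
      refine smul_cancel hcast ?_
      rw [← Derivation.map_smul, Hrec (m+1), map_sum]
      have hterm : ∀ i ∈ Finset.range (m+1), Dn 1 (X i.succPNat * H (m + 1 - (i+1)))
          = C (((i+1 : ℕ)) : ℚ) * H (m - i) + X i.succPNat * ∑ j ∈ Finset.range (m - i), H j := by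
        intro i hi
        rw [Derivation.leibniz, Dn_X, smul_eq_mul, smul_eq_mul,
          show m + 1 - (i+1) = m - i by omega, ih (m - i) (by omega)]
        simp only [Nat.succPNat_coe]
        push_cast
        ring
      rw [Finset.sum_congr rfl hterm, Finset.sum_add_distrib]
      have e1 : ∑ i ∈ Finset.range (m+1), C (((i+1 : ℕ)) : ℚ) * H (m - i)
          = ∑ j ∈ Finset.range (m+1), ((m+1-j : ℕ) : ℚ) • H j := by
        rw [← Finset.sum_range_reflect (fun j => ((m+1-j : ℕ) : ℚ) • H j) (m+1)]
        refine Finset.sum_congr rfl fun i hi => ?_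
        simp only [Finset.mem_range] at hi
        rw [smul_eq_C_mul, show m + 1 - 1 - i = m - i by omega,
          show m + 1 - (m - i) = i + 1 by omega]
      have e2 : ∑ j ∈ Finset.range (m+1), (j : ℚ) • H j
          = ∑ i ∈ Finset.range (m+1), X i.succPNat * ∑ l ∈ Finset.range (m - i), H l := by
        calc ∑ j ∈ Finset.range (m+1), (j : ℚ) • H j
            = ∑ j ∈ Finset.range (m+1), ∑ i ∈ Finset.range j, X i.succPNat * H (j - 1 - i) := by
              refine Finset.sum_congr rfl fun j hj => ?_
              rw [Hrec j]
              exact Finset.sum_congr rfl fun i hi => by rw [show j - (i+1) = j - 1 - i by omega]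
          _ = ∑ i ∈ Finset.range (m+1), ∑ l ∈ Finset.range (m+1-1-i), X i.succPNat * H l :=
              double_sum (m+1) (fun i l => X i.succPNat * H l)
          _ = ∑ i ∈ Finset.range (m+1), X i.succPNat * ∑ l ∈ Finset.range (m - i), H l := by
              refine Finset.sum_congr rfl fun i hi => ?_
              rw [show m + 1 - 1 - i = m - i by omega, Finset.mul_sum]
      rw [e1, ← e2, Finset.smul_sum, ← Finset.sum_add_distrib]
      refine Finset.sum_congr rfl fun j hj => ?_
      simp only [Finset.mem_range] at hj
      rw [← add_smul, ← Nat.cast_add, show m + 1 - j + j = m + 1 by omega]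

lemma lemB (H : ℕ → MvPolynomial ℕ+ ℚ) (H0 : H 0 = 1)
    (Hrec : ∀ m : ℕ, (m : ℚ) • H m =
      ∑ i ∈ Finset.range m, X i.succPNat * H (m - (i + 1))) (m : ℕ) :
    Dn 2 (H m) = ∑ j ∈ Finset.range m, ((m - j : ℕ) : ℚ) • H j := by
  induction m using Nat.strong_induction_on with
  | _ m ih =>
    obtain _ | m := m
    · simp [H0]
    · have hcast : ((m + 1 : ℕ) : ℚ) ≠ 0 := by positivity
      refine smul_cancel hcast ?_
      rw [← Derivation.map_smul, Hrec (m+1), map_sum]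
      have hterm : ∀ i ∈ Finset.range (m+1), Dn 2 (X i.succPNat * H (m + 1 - (i+1)))
          = C ((((i+1 : ℕ)) : ℚ)^2) * H (m - i)
            + X i.succPNat * ∑ l ∈ Finset.range (m - i), ((m - i - l : ℕ) : ℚ) • H l := by
        intro i hi
        rw [Derivation.leibniz, Dn_X, smul_eq_mul, smul_eq_mul,
          show m + 1 - (i+1) = m - i by omega, ih (m - i) (by omega)]
        simp only [Nat.succPNat_coe]
        push_cast
        ring
      rw [Finset.sum_congr rfl hterm, Finset.sum_add_distrib]
      have e1 : ∑ i ∈ Finset.range (m+1), C ((((i+1 : ℕ)) : ℚ)^2) * H (m - i)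
          = ∑ j ∈ Finset.range (m+1), (((m+1-j : ℕ) : ℚ)^2) • H j := by
        rw [← Finset.sum_range_reflect (fun j => (((m+1-j : ℕ) : ℚ)^2) • H j) (m+1)]
        refine Finset.sum_congr rfl fun i hi => ?_
        simp only [Finset.mem_range] at hi
        rw [smul_eq_C_mul, show m + 1 - 1 - i = m - i by omega,
          show m + 1 - (m - i) = i + 1 by omega]
      have e2 : ∑ j ∈ Finset.range (m+1), ((m+1-j : ℕ) : ℚ) • ((j : ℚ) • H j)
          = ∑ i ∈ Finset.range (m+1),
              X i.succPNat * ∑ l ∈ Finset.range (m - i), ((m - i - l : ℕ) : ℚ) • H l := by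
        calc ∑ j ∈ Finset.range (m+1), ((m+1-j : ℕ) : ℚ) • ((j : ℚ) • H j)
            = ∑ j ∈ Finset.range (m+1), ∑ i ∈ Finset.range j,
                ((m + 1 - (i + (j-1-i) + 1) : ℕ) : ℚ) • (X i.succPNat * H (j - 1 - i)) := by
              refine Finset.sum_congr rfl fun j hj => ?_
              rw [Hrec j, Finset.smul_sum]
              refine Finset.sum_congr rfl fun i hi => ?_
              simp only [Finset.mem_range] at hi
              rw [show j - (i+1) = j - 1 - i by omega, show i + (j - 1 - i) + 1 = j by omega]
          _ = ∑ i ∈ Finset.range (m+1), ∑ l ∈ Finset.range (m+1-1-i),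
                ((m + 1 - (i + l + 1) : ℕ) : ℚ) • (X i.succPNat * H l) :=
              double_sum (m+1) (fun i l => ((m + 1 - (i + l + 1) : ℕ) : ℚ) • (X i.succPNat * H l))
          _ = ∑ i ∈ Finset.range (m+1),
                X i.succPNat * ∑ l ∈ Finset.range (m - i), ((m - i - l : ℕ) : ℚ) • H l := by
              refine Finset.sum_congr rfl fun i hi => ?_
              rw [show m + 1 - 1 - i = m - i by omega, Finset.mul_sum]
              refine Finset.sum_congr rfl fun l hl => ?_
              simp only [Finset.mem_range] at hl
              rw [show m + 1 - (i + l + 1) = m - i - l by omega, mul_smul_comm]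
      rw [e1, ← e2, Finset.smul_sum, ← Finset.sum_add_distrib]
      refine Finset.sum_congr rfl fun j hj => ?_
      simp only [Finset.mem_range] at hj
      rw [smul_smul, smul_smul, ← add_smul]
      congr 1
      have h1 : ((m + 1 - j : ℕ) : ℚ) = (m : ℚ) + 1 - (j : ℚ) := by
        push_cast [Nat.cast_sub (by omega : j ≤ m + 1)]
        ring
      rw [h1]
      push_cast
      ring

lemma lemC (H : ℕ → MvPolynomial ℕ+ ℚ) (H0 : H 0 = 1)
    (Hrec : ∀ m : ℕ, (m : ℚ) • H m =
      ∑ i ∈ Finset.range m, X i.succPNat * H (m - (i + 1))) (m : ℕ) :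
    Dn 2 (H m) = Dn 1 (Dn 1 (H (m+1))) := by
  rw [lemA H H0 Hrec (m+1), map_sum]
  rw [Finset.sum_congr rfl fun j _ => lemA H H0 Hrec j]
  rw [lemB H H0 Hrec m]
  symm
  calc ∑ j ∈ Finset.range (m+1), ∑ i ∈ Finset.range j, H i
      = ∑ j ∈ Finset.range (m+1), ∑ i ∈ Finset.range j, (fun a _ => H a) i (j - 1 - i) := rfl
    _ = ∑ i ∈ Finset.range (m+1), ∑ l ∈ Finset.range (m+1-1-i), (fun a _ => H a) i l :=
        double_sum (m+1) (fun a _ => H a)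
    _ = ∑ i ∈ Finset.range (m+1), ((m - i : ℕ) : ℚ) • H i := by
        refine Finset.sum_congr rfl fun i hi => ?_
        rw [Finset.sum_const, Finset.card_range, show m + 1 - 1 - i = m - i by omega,
          ← Nat.cast_smul_eq_nsmul ℚ]
    _ = ∑ i ∈ Finset.range m, ((m - i : ℕ) : ℚ) • H i := by
        rw [Finset.sum_range_succ, Nat.sub_self]
        simp

lemma commD : ∀ x, Dn 1 (Dn 2 x) = Dn 2 (Dn 1 x) := by
  have h : ⁅Dn 1, Dn 2⁆ = 0 := by
    apply derivation_ext
    intro i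
    rw [Derivation.commutator_apply, Dn_X, Dn_X]
    simp
  intro x
  have := congrArg (fun D => D x) h
  simpa [Derivation.commutator_apply, sub_eq_zero] using this

theorem stmt6 (H : ℕ → MvPolynomial ℕ+ ℚ) (H0 : H 0 = 1)
    (Hrec : ∀ m : ℕ, 1 ≤ m → (m : ℚ) • H m =
      ∑ i ∈ Finset.range m, X i.succPNat * H (m - (i + 1)))
    (k m : ℕ) :
    ((Dn 2).toLinearMap ^ k) (H m) = ((Dn 1).toLinearMap ^ (2 * k)) (H (m + k)) := by
  have Hrec' : ∀ m : ℕ, (m : ℚ) • H m =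
      ∑ i ∈ Finset.range m, X i.succPNat * H (m - (i + 1)) := by
    intro m
    rcases Nat.eq_zero_or_pos m with h | h
    · subst h; simp
    · exact Hrec m h
  have hcomm : Commute ((Dn 1).toLinearMap) ((Dn 2).toLinearMap) := by
    apply LinearMap.ext
    intro x
    exact commD x
  induction k generalizing m with
  | zero => simp
  | succ k ihk =>
    have step : ((Dn 2).toLinearMap ^ (k+1)) (H m)
        = ((Dn 2).toLinearMap ^ k) ((Dn 1).toLinearMap ((Dn 1).toLinearMap (H (m+1)))) := by
      rw [pow_succ, Module.End.mul_apply]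
      congr 1
      exact lemC H H0 Hrec' m
    rw [step]
    have hc2 : Commute ((Dn 2).toLinearMap ^ k) ((Dn 1).toLinearMap) :=
      (hcomm.symm.pow_left k)
    have swap : ((Dn 2).toLinearMap ^ k) ((Dn 1).toLinearMap ((Dn 1).toLinearMap (H (m+1))))
        = (Dn 1).toLinearMap ((Dn 1).toLinearMap (((Dn 2).toLinearMap ^ k) (H (m+1)))) := by
      have h1 := congrArg (fun f => f ((Dn 1).toLinearMap (H (m+1)))) hc2.eq
      have h2 := congrArg (fun f => f (H (m+1))) hc2.eq
      simp only [Module.End.mul_apply] at h1 h2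
      rw [h1, h2]
    rw [swap, ihk (m+1)]
    rw [show 2 * (k+1) = 2 * k + 1 + 1 by ring, pow_succ', pow_succ', Module.End.mul_apply,
      Module.End.mul_apply, show m + (k+1) = m + 1 + k by omega]
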